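/- Let μ be a probability measure on S^1 absolutely continuous with respect to the Lebesgue measure on S^1, and let 1 ≤ p < ∞ with h(x) = |x|^p. Then (ν₁,ν₂) ↦ LCOT_{μ,p}(ν₁,ν₂)^{1/p} defines a metric on the space of probability measures on S^1: it is nonnegative, symmetric, vanishes exactly when ν₁ = ν₂, and satisfies the triangle inequality LCOT_{μ,p}(ν₁,ν₂)^{1/p} ≤ LCOT_{μ,p}(ν₁,ν₃)^{1/p} + LCOT_{μ,p}(ν₃,ν₂)^{1/p}. -/

import Mathlib

open MeasureTheory Set

noncomputable section

/-- Geodesic distance on the circle `ℝ/ℤ`, for representatives `x, y ∈ ℝ`: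
`|x - y|_{S¹} = min_{k ∈ ℤ} |x - y + k|`. -/
def circleDist (x y : ℝ) : ℝ := ⨅ k : ℤ, |x - y + (k : ℝ)|

/-- The CDF of a circular probability measure (represented as a probability measure on `ℝ`
supported on `[0,1)`), extended to all of `ℝ` by `F(y + n) = F(y) + n`. -/
def cdf (μ : Measure ℝ) (y : ℝ) : ℝ := (μ (Ico 0 (Int.fract y))).toReal + (⌊y⌋ : ℝ)

/-- The quantile function `F_μ⁻¹(y) := inf {x | F_μ(x) > y}`. -/
def quantile (μ : Measure ℝ) (y : ℝ) : ℝ := sInf {x : ℝ | cdf μ x > y}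

/-- The CDF with respect to a reference (cutting) point `x₀`:
`F_{μ,x₀}(y) := F_μ(x₀ + y) - F_μ(x₀)`. -/
def cdfCut (μ : Measure ℝ) (x₀ y : ℝ) : ℝ := cdf μ (x₀ + y) - cdf μ x₀

/-- The quantile of the cut CDF: `F_{μ,x₀}⁻¹(y) := inf {x | F_{μ,x₀}(x) > y}`. -/
def quantileCut (μ : Measure ℝ) (x₀ y : ℝ) : ℝ := sInf {x : ℝ | cdfCut μ x₀ x > y}

/-- The circular optimal transport cost `COT_h(μ,ν)` with ground cost `h (|x - y|_{S¹})`,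
the infimum over all couplings of `μ` and `ν`. -/
def COT (h : ℝ → ℝ) (μ ν : Measure ℝ) : ℝ :=
  sInf {c : ℝ | ∃ γ : Measure (ℝ × ℝ), IsProbabilityMeasure γ ∧
    γ.map Prod.fst = μ ∧ γ.map Prod.snd = ν ∧
    c = ∫ p, h (circleDist p.1 p.2) ∂γ}

/-- The transport cost associated with cutting the circle at `x₀`:
`∫₀¹ h(|F_{μ,x₀}⁻¹(x) - F_{ν,x₀}⁻¹(x)|) dx`. -/
def cutCost (h : ℝ → ℝ) (μ ν : Measure ℝ) (x₀ : ℝ) : ℝ :=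
  ∫ x in (0:ℝ)..1, h |quantileCut μ x₀ x - quantileCut ν x₀ x|

/-- The transport cost associated with a shift `α`:
`∫₀¹ h(|F_μ⁻¹(x) - F_ν⁻¹(x - α)|) dx`. -/
def shiftCost (h : ℝ → ℝ) (μ ν : Measure ℝ) (α : ℝ) : ℝ :=
  ∫ x in (0:ℝ)..1, h |quantile μ x - quantile ν (x - α)|

/-- The circular Monge map determined by a cutting point `x_cut`:
`M_μ^ν(x) := F_{ν,x_cut}⁻¹(F_{μ,x_cut}(x - x_cut)) + x_cut`. -/
def mongeMap (μ ν : Measure ℝ) (xcut : ℝ) (x : ℝ) : ℝ :=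
  quantileCut ν xcut (cdfCut μ xcut (x - xcut)) + xcut

/-- The LCOT embedding of `ν` with respect to the reference `μ` and shift `α`:
`ν̂(x) := F_ν⁻¹(F_μ(x) - α) - x`. -/
def lcotEmbed (μ ν : Measure ℝ) (α : ℝ) (x : ℝ) : ℝ :=
  quantile ν (cdf μ x - α) - x





lemma circleDist_eq (x y : ℝ) :
    circleDist x y = min (Int.fract (x - y)) (1 - Int.fract (x - y)) := by
  set t := x - y with ht
  have hb : BddBelow (Set.range fun k : ℤ => |t + (k : ℝ)|) :=
    ⟨0, by rintro a ⟨k, rfl⟩; positivity⟩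
  refine le_antisymm (le_min ?_ ?_) (le_ciInf fun k => ?_)
  · have h := ciInf_le hb (-⌊t⌋)
    have he : |t + ((-⌊t⌋ : ℤ) : ℝ)| = Int.fract t := by
      push_cast
      rw [show t + -(⌊t⌋ : ℝ) = Int.fract t by rw [← Int.self_sub_floor]; ring]
      exact abs_of_nonneg (Int.fract_nonneg t)
    rwa [he] at h
  · have h := ciInf_le hb (-⌊t⌋ - 1)
    have he : |t + ((-⌊t⌋ - 1 : ℤ) : ℝ)| = 1 - Int.fract t := by
      push_cast
      rw [show t + (-(⌊t⌋ : ℝ) - 1) = Int.fract t - 1 by rw [← Int.self_sub_floor]; ring]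
      rw [abs_of_nonpos (by linarith [Int.fract_lt_one t])]
      ring
    rwa [he] at h
  · have hfr : Int.fract (t + (k : ℝ)) = Int.fract t := Int.fract_add_intCast t k
    have hfl : Int.fract (t + (k : ℝ)) + (⌊t + (k : ℝ)⌋ : ℝ) = t + (k : ℝ) :=
      Int.fract_add_floor _
    rcases le_or_gt 0 (t + (k : ℝ)) with h0 | h0
    · have hfn : (0 : ℤ) ≤ ⌊t + (k : ℝ)⌋ := Int.floor_nonneg.mpr h0
      have hc : (0 : ℝ) ≤ (⌊t + (k : ℝ)⌋ : ℝ) := by exact_mod_cast hfn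
      rw [abs_of_nonneg h0]
      refine min_le_of_left_le ?_
      rw [← hfr]; linarith
    · have hneg : ⌊t + (k : ℝ)⌋ < 0 := by
        by_contra hcon
        exact absurd (Int.floor_nonneg.mp (not_lt.mp hcon)) (not_le.mpr h0)
      have hneg' : ⌊t + (k : ℝ)⌋ ≤ -1 := by omega
      have hc : (⌊t + (k : ℝ)⌋ : ℝ) ≤ -1 := by exact_mod_cast hneg'
      rw [abs_of_neg h0]
      refine min_le_of_right_le ?_
      rw [← hfr]; linarith

lemma circleDist_nonneg (x y : ℝ) : 0 ≤ circleDist x y := by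
  rw [circleDist_eq]
  exact le_min (Int.fract_nonneg _) (by linarith [Int.fract_lt_one (x - y)])

lemma circleDist_le_one (x y : ℝ) : circleDist x y ≤ 1 := by
  rw [circleDist_eq]
  exact min_le_of_right_le (by linarith [Int.fract_nonneg (x - y)])

lemma circleDist_comm (x y : ℝ) : circleDist x y = circleDist y x := by
  rw [circleDist_eq, circleDist_eq]
  rcases eq_or_ne (Int.fract (x - y)) 0 with h | h
  · have h' : Int.fract (y - x) = 0 := by
      rw [show y - x = -(x - y) by ring, Int.fract_neg_eq_zero]; exact h
    rw [h, h']
  · have h' : Int.fract (y - x) = 1 - Int.fract (x - y) := by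
      rw [show y - x = -(x - y) by ring, Int.fract_neg h]
    rw [h']; rw [min_comm]; ring_nf


lemma circleDist_eq_zero_iff (x y : ℝ) :
    circleDist x y = 0 ↔ Int.fract (x - y) = 0 := by
  have he : circleDist x y = min (Int.fract (x - y)) (1 - Int.fract (x - y)) :=
    circleDist_eq x y
  rw [he]
  constructor
  · intro h
    rcases min_eq_iff.mp h with ⟨h1, _⟩ | ⟨h1, _⟩
    · exact h1
    · exfalso; linarith [Int.fract_lt_one (x - y)]
  · intro h; rw [h]; simp

lemma circleDist_triangle (a b c : ℝ) :
    circleDist a b ≤ circleDist a c + circleDist c b := by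
  have hb1 : BddBelow (Set.range fun k : ℤ => |a - b + (k : ℝ)|) :=
    ⟨0, by rintro u ⟨k, rfl⟩; positivity⟩
  have key : ∀ k l : ℤ, circleDist a b ≤ |a - c + (k : ℝ)| + |c - b + (l : ℝ)| := by
    intro k l
    have h1 : circleDist a b ≤ |a - b + ((k + l : ℤ) : ℝ)| := ciInf_le hb1 (k + l)
    refine h1.trans ?_
    have : a - b + ((k + l : ℤ) : ℝ) = (a - c + k) + (c - b + l) := by push_cast; ring
    rw [this]
    exact abs_add_le _ _
  have h2 : circleDist a b - circleDist a c ≤ circleDist c b := by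
    refine le_ciInf fun l => ?_
    have h3 : circleDist a b - |c - b + (l : ℝ)| ≤ circleDist a c := by
      refine le_ciInf fun k => ?_
      linarith [key k l]
    linarith
  linarith


set_option linter.unusedSectionVars false
variable (ν : Measure ℝ) [IsProbabilityMeasure ν]

lemma meas_toReal_le_one (s : Set ℝ) : (ν s).toReal ≤ 1 := by
  have h := measure_mono (subset_univ s) (μ := ν)
  rw [measure_univ] at h
  have := ENNReal.toReal_mono (by simp) h
  simpa using this

lemma cdf_le (y : ℝ) : cdf ν y ≤ ⌊y⌋ + 1 := by
  have := meas_toReal_le_one ν (Ico 0 (Int.fract y))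
  unfold cdf; linarith

lemma cdf_ge (y : ℝ) : (⌊y⌋ : ℝ) ≤ cdf ν y := by
  have : (0:ℝ) ≤ (ν (Ico 0 (Int.fract y))).toReal := ENNReal.toReal_nonneg
  unfold cdf; linarith

lemma cdf_mono : Monotone (cdf ν) := by
  intro x y hxy
  rcases eq_or_lt_of_le (Int.floor_le_floor hxy) with hf | hf
  · have hfr : Int.fract x ≤ Int.fract y := by
      unfold Int.fract; rw [hf]; linarith
    have : ν (Ico 0 (Int.fract x)) ≤ ν (Ico 0 (Int.fract y)) :=
      measure_mono (Ico_subset_Ico le_rfl hfr)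
    have h2 := ENNReal.toReal_mono (measure_ne_top ν _) this
    unfold cdf; rw [hf]; linarith
  · have h1 : cdf ν x ≤ ⌊x⌋ + 1 := cdf_le ν x
    have h2 : (⌊y⌋ : ℝ) ≤ cdf ν y := cdf_ge ν y
    have h3 : (⌊x⌋ : ℝ) + 1 ≤ (⌊y⌋ : ℝ) := by exact_mod_cast hf
    linarith

lemma cdf_zero : cdf ν 0 = 0 := by
  unfold cdf; simp

lemma cdf_one : cdf ν 1 = 1 := by
  unfold cdf; simp [Int.fract_one]

lemma cdf_nonpos {x : ℝ} (hx : x ≤ 0) : cdf ν x ≤ 0 := by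
  have := cdf_mono ν hx
  rwa [cdf_zero] at this

lemma cdf_of_mem {x : ℝ} (hx : x ∈ Ico (0:ℝ) 1) : cdf ν x = (ν (Ico 0 x)).toReal := by
  unfold cdf
  rw [Int.fract_eq_self.mpr ⟨hx.1, hx.2⟩, Int.floor_eq_zero_iff.mpr ⟨hx.1, hx.2⟩]
  simp

lemma cdf_add_int (x : ℝ) (k : ℤ) : cdf ν (x + k) = cdf ν x + k := by
  unfold cdf
  rw [Int.fract_add_intCast, Int.floor_add_intCast]
  push_cast; ring

lemma quantile_set_nonempty (s : ℝ) : {x : ℝ | cdf ν x > s}.Nonempty := by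
  refine ⟨(⌊s⌋ : ℝ) + 2, ?_⟩
  have h1 : ((⌊(⌊s⌋ : ℝ) + 2⌋ : ℤ) : ℝ) ≤ cdf ν ((⌊s⌋ : ℝ) + 2) := cdf_ge ν _
  have h2 : (⌊(⌊s⌋ : ℝ) + 2⌋ : ℤ) = ⌊s⌋ + 2 := by
    rw [show ((⌊s⌋ : ℝ) + 2) = ((⌊s⌋ + 2 : ℤ) : ℝ) by push_cast; ring, Int.floor_intCast]
  rw [h2] at h1
  push_cast at h1
  have := Int.lt_floor_add_one s
  show cdf ν _ > s
  linarith

lemma quantile_set_bddBelow (s : ℝ) : BddBelow {x : ℝ | cdf ν x > s} := by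
  refine ⟨s - 1, fun x hx => ?_⟩
  have h1 : cdf ν x ≤ ⌊x⌋ + 1 := cdf_le ν x
  have h2 : (⌊x⌋ : ℝ) ≤ x := Int.floor_le x
  have h3 : cdf ν x > s := hx
  linarith

lemma quantile_mono : Monotone (quantile ν) := by
  intro s t hst
  exact csInf_le_csInf (quantile_set_bddBelow ν s) (quantile_set_nonempty ν t)
    (fun x hx => lt_of_le_of_lt hst hx)

lemma quantile_add_int (s : ℝ) (k : ℤ) : quantile ν (s + k) = quantile ν s + k := by
  unfold quantile
  have hset : {x : ℝ | cdf ν x > s + k} = (fun y => y + (k:ℝ)) '' {x : ℝ | cdf ν x > s} := by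
    ext x
    simp only [mem_setOf_eq, mem_image]
    constructor
    · intro hx
      refine ⟨x - k, ?_, by ring⟩
      have := cdf_add_int ν (x - k) k
      rw [show x - (k:ℝ) + (k:ℝ) = x by ring] at this
      show cdf ν (x - (k:ℝ)) > s
      rw [show x - (k:ℝ) = x + ((-k : ℤ):ℝ) by push_cast; ring]
      rw [cdf_add_int]
      push_cast
      linarith [hx]
    · rintro ⟨y, hy, rfl⟩
      show cdf ν (y + (k:ℝ)) > s + k
      rw [show y + (k:ℝ) = y + ((k : ℤ):ℝ) by norm_cast, cdf_add_int]
      linarith [hy]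
  rw [hset]
  have hbdd : BddBelow ((fun y => y + (k:ℝ)) '' {x : ℝ | cdf ν x > s}) := by
    obtain ⟨b, hb⟩ := quantile_set_bddBelow ν s
    exact ⟨b + k, by rintro u ⟨z, hz, rfl⟩; have := hb hz; simp only []; linarith⟩
  apply le_antisymm
  · have h1 : sInf ((fun y => y + (k:ℝ)) '' {x : ℝ | cdf ν x > s}) - k ≤
        sInf {x : ℝ | cdf ν x > s} := by
      refine le_csInf (quantile_set_nonempty ν s) fun y hy => ?_
      have := csInf_le hbdd ⟨y, hy, rfl⟩
      simp only [] at this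
      linarith
    linarith
  · refine le_csInf ((quantile_set_nonempty ν s).image _) ?_
    rintro b ⟨y, hy, rfl⟩
    have := csInf_le (quantile_set_bddBelow ν s) hy
    show sInf {x : ℝ | cdf ν x > s} + (k:ℝ) ≤ y + (k:ℝ)
    linarith

lemma quantile_nonneg {s : ℝ} (hs : 0 ≤ s) : 0 ≤ quantile ν s := by
  refine le_csInf (quantile_set_nonempty ν s) fun x hx => ?_
  by_contra hcon
  push_neg at hcon
  have h1 : cdf ν x ≤ 0 := cdf_nonpos ν hcon.le
  have h2 : cdf ν x > s := hx
  linarith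

lemma quantile_lt_iff (hν1 : ν (Ico 0 1) = 1) {s y : ℝ} (hs0 : 0 ≤ s)
    (hy0 : 0 < y) (hy1 : y ≤ 1) :
    quantile ν s < y ↔ s < (ν (Ico 0 y)).toReal := by
  constructor
  · intro h
    obtain ⟨x, hxS, hxy⟩ :=
      (csInf_lt_iff (quantile_set_bddBelow ν s) (quantile_set_nonempty ν s)).mp h
    have hxgt : cdf ν x > s := hxS
    have hx0 : 0 < x := by
      by_contra hcon; push_neg at hcon
      linarith [cdf_nonpos ν hcon]
    have hcx : cdf ν x = (ν (Ico 0 x)).toReal :=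
      cdf_of_mem ν ⟨hx0.le, lt_of_lt_of_le hxy hy1⟩
    have hmon : (ν (Ico 0 x)).toReal ≤ (ν (Ico 0 y)).toReal :=
      ENNReal.toReal_mono (measure_ne_top _ _)
        (measure_mono (Ico_subset_Ico le_rfl hxy.le))
    linarith
  · intro h
    have hmono : Monotone (fun n : ℕ => Ico (0:ℝ) (y - y / (n + 1))) := by
      intro m n hmn
      refine Ico_subset_Ico le_rfl ?_
      have h2 : (m:ℝ) + 1 ≤ (n:ℝ) + 1 := by exact_mod_cast Nat.succ_le_succ hmn
      have := div_le_div_of_nonneg_left hy0.le (by positivity : (0:ℝ) < (m:ℝ) + 1) h2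
      linarith
    have hU : (⋃ n : ℕ, Ico (0:ℝ) (y - y/(n+1))) = Ico 0 y := by
      ext z
      simp only [mem_iUnion, mem_Ico]
      constructor
      · rintro ⟨n, h0, h1⟩
        have : (0:ℝ) ≤ y / (n+1) := by positivity
        exact ⟨h0, by linarith⟩
      · rintro ⟨h0, h1⟩
        obtain ⟨n, hn⟩ := exists_nat_one_div_lt (div_pos (sub_pos.mpr h1) hy0)
        refine ⟨n, h0, ?_⟩
        have hmul := mul_lt_mul_of_pos_left hn hy0
        rw [mul_div_cancel₀ _ (ne_of_gt hy0)] at hmul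
        have : y * (1 / ((n:ℝ)+1)) = y / ((n:ℝ)+1) := by ring
        rw [this] at hmul
        linarith
    have htend := tendsto_measure_iUnion_atTop (μ := ν) hmono
    rw [hU] at htend
    have htendR : Filter.Tendsto (fun n : ℕ => (ν (Ico (0:ℝ) (y - y/(n+1)))).toReal)
        Filter.atTop (nhds ((ν (Ico (0:ℝ) y)).toReal)) :=
      (ENNReal.tendsto_toReal (measure_ne_top _ _)).comp htend
    obtain ⟨n, hn⟩ := (htendR.eventually (lt_mem_nhds h)).exists
    have hx0 : (0:ℝ) ≤ y - y/(n+1) := by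
      have : y/((n:ℝ)+1) ≤ y := div_le_self hy0.le (by norm_num : (1:ℝ) ≤ (n:ℝ)+1)
      linarith
    have hx1 : y - y/(n+1) < y := by
      have : (0:ℝ) < y / ((n:ℝ)+1) := by positivity
      linarith
    have hcx : cdf ν (y - y/(n+1)) = (ν (Ico 0 (y - y/(n+1)))).toReal :=
      cdf_of_mem ν ⟨hx0, lt_of_lt_of_le hx1 hy1⟩
    have hmem : (y - y/(n+1)) ∈ {x : ℝ | cdf ν x > s} := by
      show cdf ν _ > s
      rw [hcx]; exact hn
    exact lt_of_le_of_lt (csInf_le (quantile_set_bddBelow ν s) hmem) hx1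

lemma quantile_mem_Ico (hν1 : ν (Ico 0 1) = 1) {s : ℝ} (hs : s ∈ Ico (0:ℝ) 1) :
    quantile ν s ∈ Ico (0:ℝ) 1 := by
  refine ⟨quantile_nonneg ν hs.1, ?_⟩
  rw [quantile_lt_iff ν hν1 hs.1 one_pos le_rfl, hν1]
  simpa using hs.2

lemma fract_quantile (hν1 : ν (Ico 0 1) = 1) (s : ℝ) :
    Int.fract (quantile ν s) = quantile ν (Int.fract s) := by
  conv_lhs => rw [show s = Int.fract s + (⌊s⌋ : ℝ) by rw [Int.fract_add_floor]]
  rw [quantile_add_int, Int.fract_add_intCast, Int.fract_eq_self.mpr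
    ⟨(quantile_mem_Ico ν hν1 ⟨Int.fract_nonneg s, Int.fract_lt_one s⟩).1,
     (quantile_mem_Ico ν hν1 ⟨Int.fract_nonneg s, Int.fract_lt_one s⟩).2⟩]

lemma volume_fract_sub_lt (α c : ℝ) (hc0 : 0 ≤ c) (hc1 : c ≤ 1) :
    volume {s : ℝ | s ∈ Ico (0:ℝ) 1 ∧ Int.fract (s - α) < c} = ENNReal.ofReal c := by
  set β := Int.fract α with hβ
  have hβ0 : 0 ≤ β := Int.fract_nonneg α
  have hβ1 : β < 1 := Int.fract_lt_one α
  have hfr : ∀ s : ℝ, Int.fract (s - α) = Int.fract (s - β) := by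
    intro s
    rw [show s - β = s - α + (⌊α⌋ : ℝ) by rw [hβ, Int.fract]; ring]
    rw [show s - α + (⌊α⌋ : ℝ) = s - α + ((⌊α⌋ : ℤ) : ℝ) by norm_cast]
    rw [Int.fract_add_intCast]
  have hfrneg : ∀ s : ℝ, 0 ≤ s → s < β → Int.fract (s - β) = s - β + 1 := by
    intro s h0 h1
    conv_lhs => rw [show s - β = (s - β + 1) - ((1:ℤ):ℝ) by push_cast; ring]
    rw [Int.fract_sub_intCast, Int.fract_eq_self.mpr ⟨by linarith, by linarith⟩]
  have hset : {s : ℝ | s ∈ Ico (0:ℝ) 1 ∧ Int.fract (s - α) < c}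
      = Ico β (min (β + c) 1) ∪ Ico 0 (β + c - 1) := by
    ext s
    simp only [mem_setOf_eq, mem_Ico, mem_union, lt_min_iff]
    constructor
    · rintro ⟨⟨h0, h1⟩, hf⟩
      rw [hfr] at hf
      rcases le_or_gt β s with hb | hb
      · left
        rw [Int.fract_eq_self.mpr ⟨by linarith, by linarith⟩] at hf
        exact ⟨hb, by linarith, h1⟩
      · right
        rw [hfrneg s h0 hb] at hf
        exact ⟨h0, by linarith⟩
    · rintro (⟨hb, hs1, hs2⟩ | ⟨h0, h1⟩)
      · refine ⟨⟨le_trans hβ0 hb, hs2⟩, ?_⟩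
        rw [hfr, Int.fract_eq_self.mpr ⟨by linarith, by linarith⟩]
        linarith
      · have hsβ : s < β := by linarith
        refine ⟨⟨h0, by linarith⟩, ?_⟩
        rw [hfr, hfrneg s h0 hsβ]
        linarith
  have hdisj : Disjoint (Ico β (min (β + c) 1)) (Ico (0:ℝ) (β + c - 1)) := by
    rw [Set.disjoint_left]
    rintro a ⟨ha1, _⟩ ⟨_, ha4⟩
    linarith
  rw [hset, measure_union hdisj measurableSet_Ico, Real.volume_Ico, Real.volume_Ico]
  rcases le_or_gt (β + c) 1 with hle | hlt
  · rw [min_eq_left hle]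
    rw [ENNReal.ofReal_eq_zero.mpr (by linarith : β + c - 1 - 0 ≤ 0), add_zero]
    congr 1; ring
  · rw [min_eq_right hlt.le,
      ← ENNReal.ofReal_add (by linarith : (0:ℝ) ≤ 1 - β) (by linarith : (0:ℝ) ≤ β + c - 1 - 0)]
    congr 1; ring

lemma map_quantile_fract (hν1 : ν (Ico 0 1) = 1) (α : ℝ) :
    Measure.map (fun s => quantile ν (Int.fract (s - α))) (volume.restrict (Ico (0:ℝ) 1))
      = ν := by
  have hmeas : Measurable (fun s : ℝ => quantile ν (Int.fract (s - α))) :=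
    (quantile_mono ν).measurable.comp
      (measurable_fract.comp (measurable_id.sub measurable_const))
  have hcompl : ν (Ico (0:ℝ) 1)ᶜ = 0 := by
    rw [measure_compl measurableSet_Ico (measure_ne_top _ _), hν1, measure_univ, tsub_self]
  have hres : volume.restrict (Ico (0:ℝ) 1) Set.univ = 1 := by
    rw [Measure.restrict_apply MeasurableSet.univ, univ_inter, Real.volume_Ico]
    norm_num
  haveI hfin : IsFiniteMeasure (Measure.map (fun s => quantile ν (Int.fract (s - α)))
      (volume.restrict (Ico (0:ℝ) 1))) := by
    constructor
    rw [Measure.map_apply hmeas MeasurableSet.univ, preimage_univ, hres]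
    exact ENNReal.one_lt_top
  refine ext_of_generate_finite (range Iio)
    (by rw [BorelSpace.measurable_eq (α := ℝ)]; exact borel_eq_generateFrom_Iio ℝ) isPiSystem_Iio
    ?_ ?_
  · rintro S ⟨y, rfl⟩
    rw [Measure.map_apply hmeas measurableSet_Iio,
      Measure.restrict_apply (hmeas measurableSet_Iio)]
    rcases le_or_gt y 0 with hy | hy
    · have h1 : (fun s => quantile ν (Int.fract (s - α))) ⁻¹' Iio y ∩ Ico 0 1 = ∅ := by
        ext s
        simp only [mem_inter_iff, mem_preimage, mem_Iio, mem_empty_iff_false, iff_false,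
          not_and]
        intro hlt
        exfalso
        have := quantile_nonneg ν (Int.fract_nonneg (s - α))
        linarith
      rw [h1, measure_empty]
      symm
      refine measure_mono_null (fun z hz => ?_) hcompl
      simp only [mem_compl_iff, mem_Ico, not_and, not_lt]
      intro h0
      exfalso
      have : z < y := hz
      linarith
    · rcases le_or_gt y 1 with hy1 | hy1
      · have hseteq : (fun s => quantile ν (Int.fract (s - α))) ⁻¹' Iio y ∩ Ico 0 1
            = {s : ℝ | s ∈ Ico (0:ℝ) 1 ∧ Int.fract (s - α) < (ν (Ico 0 y)).toReal} := by
          ext s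
          simp only [mem_inter_iff, mem_preimage, mem_Iio, mem_setOf_eq]
          rw [quantile_lt_iff ν hν1 (Int.fract_nonneg _) hy hy1]
          tauto
        rw [hseteq, volume_fract_sub_lt α _ ENNReal.toReal_nonneg (meas_toReal_le_one ν _),
          ENNReal.ofReal_toReal (measure_ne_top _ _)]
        have hIio : Iio y ∩ Ico (0:ℝ) 1 = Ico 0 y := by
          ext z
          simp only [mem_inter_iff, mem_Iio, mem_Ico]
          constructor
          · rintro ⟨h1, h2, h3⟩; exact ⟨h2, h1⟩
          · rintro ⟨h1, h2⟩; exact ⟨h2, h1, by linarith⟩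
        calc ν (Ico 0 y) = ν (Iio y ∩ Ico (0:ℝ) 1) := by rw [hIio]
          _ = ν (Iio y) := measure_inter_conull hcompl
      · have hseteq : (fun s => quantile ν (Int.fract (s - α))) ⁻¹' Iio y ∩ Ico 0 1
            = Ico (0:ℝ) 1 := by
          refine inter_eq_right.mpr fun s hs => ?_
          simp only [mem_preimage, mem_Iio]
          have := (quantile_mem_Ico ν hν1
            ⟨Int.fract_nonneg (s - α), Int.fract_lt_one (s - α)⟩).2
          linarith
        rw [hseteq, Real.volume_Ico]
        rw [(measure_inter_conull hcompl).symm, inter_eq_right.mpr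
          (fun z hz => by simp only [mem_Iio]; exact lt_of_lt_of_le hz.2 hy1.le : Ico (0:ℝ) 1 ⊆ Iio y)]
        rw [hν1]
        norm_num
  · rw [Measure.map_apply hmeas MeasurableSet.univ, preimage_univ, hres, measure_univ]

lemma map_cdf (μ : Measure ℝ) [IsProbabilityMeasure μ] (hμ1 : μ (Ico 0 1) = 1)
    (hac : μ ≪ volume) :
    Measure.map (cdf μ) μ = volume.restrict (Ico (0:ℝ) 1) := by
  have hmeas : Measurable (cdf μ) := (cdf_mono μ).measurable
  have hatom : ∀ a : ℝ, μ {a} = 0 := fun a => hac (Real.volume_singleton)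
  have hcompl : μ (Ico (0:ℝ) 1)ᶜ = 0 := by
    rw [measure_compl measurableSet_Ico (measure_ne_top _ _), hμ1, measure_univ, tsub_self]
  have key : ∀ t : ℝ, 0 < t → t ≤ 1 →
      μ {x | x ∈ Ico (0:ℝ) 1 ∧ cdf μ x < t} = ENNReal.ofReal t := by
    intro t ht0 ht1
    set G : ℝ → ℝ := fun x => (μ (Ico 0 x)).toReal with hG
    have hGmono : Monotone G := fun u v huv => ENNReal.toReal_mono (measure_ne_top _ _)
      (measure_mono (Ico_subset_Ico le_rfl huv))
    have hGcdf : ∀ x ∈ Ico (0:ℝ) 1, cdf μ x = G x := fun x hx => cdf_of_mem μ hx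
    have hG0 : G 0 = 0 := by simp [hG]
    set S := {x : ℝ | x ∈ Icc (0:ℝ) 1 ∧ G x < t} with hS
    have h0S : (0:ℝ) ∈ S := ⟨⟨le_rfl, zero_le_one⟩, by rw [hG0]; exact ht0⟩
    have hne : S.Nonempty := ⟨0, h0S⟩
    have hbdd : BddAbove S := ⟨1, fun x hx => hx.1.2⟩
    set a := sSup S with ha
    have ha0 : 0 ≤ a := le_csSup hbdd h0S
    have ha1 : a ≤ 1 := csSup_le hne fun x hx => hx.1.2
    have hsub1 : Ico (0:ℝ) a ⊆ {x | x ∈ Ico (0:ℝ) 1 ∧ cdf μ x < t} := by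
      intro x hx
      obtain ⟨x', hx'S, hxx'⟩ := exists_lt_of_lt_csSup hne hx.2
      have hx1 : x < 1 := lt_of_lt_of_le hx.2 ha1
      refine ⟨⟨hx.1, hx1⟩, ?_⟩
      rw [hGcdf x ⟨hx.1, hx1⟩]
      exact lt_of_le_of_lt (hGmono hxx'.le) hx'S.2
    have hsub2 : {x | x ∈ Ico (0:ℝ) 1 ∧ cdf μ x < t} ⊆ Icc (0:ℝ) a := by
      intro x hx
      refine ⟨hx.1.1, le_csSup hbdd ⟨⟨hx.1.1, hx.1.2.le⟩, ?_⟩⟩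
      rw [← hGcdf x hx.1]; exact hx.2
    have hIccIco : μ (Icc (0:ℝ) a) = μ (Ico 0 a) := by
      refine le_antisymm ?_ (measure_mono Ico_subset_Icc_self)
      calc μ (Icc 0 a) = μ (Ico 0 a ∪ {a}) := by rw [Ico_union_right ha0]
        _ ≤ μ (Ico 0 a) + μ {a} := measure_union_le _ _
        _ = μ (Ico 0 a) := by rw [hatom a, add_zero]
    have hμset : μ {x | x ∈ Ico (0:ℝ) 1 ∧ cdf μ x < t} = μ (Ico 0 a) :=
      le_antisymm (le_trans (measure_mono hsub2) hIccIco.le) (measure_mono hsub1)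
    have hle : G a ≤ t := by
      rcases eq_or_lt_of_le ha0 with h0 | h0
      · rw [← h0, hG0]; exact ht0.le
      · have hmono : Monotone (fun n : ℕ => Ico (0:ℝ) (a - a / (n + 1))) := by
          intro m n hmn
          refine Ico_subset_Ico le_rfl ?_
          have h2 : (m:ℝ) + 1 ≤ (n:ℝ) + 1 := by exact_mod_cast Nat.succ_le_succ hmn
          have := div_le_div_of_nonneg_left h0.le (by positivity : (0:ℝ) < (m:ℝ) + 1) h2
          linarith
        have hU : (⋃ n : ℕ, Ico (0:ℝ) (a - a/(n+1))) = Ico 0 a := by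
          ext z
          simp only [mem_iUnion, mem_Ico]
          constructor
          · rintro ⟨n, hz0, hz1⟩
            have : (0:ℝ) ≤ a / (n+1) := by positivity
            exact ⟨hz0, by linarith⟩
          · rintro ⟨hz0, hz1⟩
            obtain ⟨n, hn⟩ := exists_nat_one_div_lt (div_pos (sub_pos.mpr hz1) h0)
            refine ⟨n, hz0, ?_⟩
            have hmul := mul_lt_mul_of_pos_left hn h0
            rw [mul_div_cancel₀ _ (ne_of_gt h0)] at hmul
            have he : a * (1 / ((n:ℝ)+1)) = a / ((n:ℝ)+1) := by ring
            rw [he] at hmul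
            linarith
        have htend := tendsto_measure_iUnion_atTop (μ := μ) hmono
        rw [hU] at htend
        have hev : ∀ n : ℕ, μ (Ico (0:ℝ) (a - a/(n+1))) ≤ ENNReal.ofReal t := by
          intro n
          have hd : (0:ℝ) < a / ((n:ℝ)+1) := by positivity
          have hxa : a - a/(n+1) < a := by linarith
          rcases le_or_gt (a - a/(n+1)) 0 with hneg | hpos
          · rw [Ico_eq_empty (by rw [not_lt]; exact hneg), measure_empty]
            exact zero_le
          · obtain ⟨x', hx'S, hxx'⟩ := exists_lt_of_lt_csSup hne hxa
            have h1 : μ (Ico (0:ℝ) (a - a/(n+1))) ≤ μ (Ico 0 x') :=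
              measure_mono (Ico_subset_Ico le_rfl hxx'.le)
            have h2 : μ (Ico (0:ℝ) x') ≤ ENNReal.ofReal t := by
              rw [← ENNReal.ofReal_toReal (measure_ne_top μ (Ico 0 x'))]
              exact ENNReal.ofReal_le_ofReal hx'S.2.le
            exact le_trans h1 h2
        have hlim := le_of_tendsto htend (Filter.Eventually.of_forall hev)
        have := ENNReal.toReal_mono (by simp) hlim
        rw [ENNReal.toReal_ofReal ht0.le] at this
        exact this
    have hge : t ≤ G a := by
      rcases eq_or_lt_of_le ha1 with h1 | h1
      · have : G a = 1 := by rw [h1, hG]; simp only []; rw [hμ1]; simp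
        linarith
      · have hanti : Antitone (fun n : ℕ => Ico (0:ℝ) (a + (1-a) / (n + 1))) := by
          intro m n hmn
          refine Ico_subset_Ico le_rfl ?_
          have h2 : (m:ℝ) + 1 ≤ (n:ℝ) + 1 := by exact_mod_cast Nat.succ_le_succ hmn
          have := div_le_div_of_nonneg_left (by linarith : (0:ℝ) ≤ 1 - a)
            (by positivity : (0:ℝ) < (m:ℝ) + 1) h2
          linarith
        have hI : (⋂ n : ℕ, Ico (0:ℝ) (a + (1-a)/(n+1))) = Icc 0 a := by
          ext z
          simp only [mem_iInter, mem_Ico, mem_Icc]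
          constructor
          · intro h
            refine ⟨(h 0).1, ?_⟩
            by_contra hcon
            push_neg at hcon
            obtain ⟨n, hn⟩ := exists_nat_one_div_lt (div_pos (sub_pos.mpr hcon)
              (by linarith : (0:ℝ) < 1 - a))
            have hmul := mul_lt_mul_of_pos_left hn (by linarith : (0:ℝ) < 1 - a)
            rw [mul_div_cancel₀ _ (by linarith : (1:ℝ) - a ≠ 0)] at hmul
            have he : (1 - a) * (1 / ((n:ℝ)+1)) = (1-a) / ((n:ℝ)+1) := by ring
            rw [he] at hmul
            have := (h n).2
            linarith
          · rintro ⟨hz0, hz1⟩ n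
            have : (0:ℝ) < (1-a) / ((n:ℝ)+1) := div_pos (by linarith) (by positivity)
            exact ⟨hz0, by linarith⟩
        have htend := tendsto_measure_iInter_atTop (μ := μ)
          (fun n => measurableSet_Ico.nullMeasurableSet) hanti ⟨0, measure_ne_top μ _⟩
        rw [hI] at htend
        have hev : ∀ n : ℕ, ENNReal.ofReal t ≤ μ (Ico (0:ℝ) (a + (1-a)/(n+1))) := by
          intro n
          set b := a + (1-a)/((n:ℝ)+1) with hb
          have hd : (0:ℝ) < (1-a) / ((n:ℝ)+1) := div_pos (by linarith) (by positivity)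
          have hab : a < b := by rw [hb]; linarith
          have hb1 : b ≤ 1 := by
            have : (1-a)/((n:ℝ)+1) ≤ 1 - a :=
              div_le_self (by linarith) (by norm_num : (1:ℝ) ≤ (n:ℝ)+1)
            rw [hb]; linarith
          have hbn : ¬ G b < t := fun hc =>
            absurd (le_csSup hbdd ⟨⟨by linarith, hb1⟩, hc⟩) (not_le.mpr hab)
          push_neg at hbn
          calc ENNReal.ofReal t ≤ ENNReal.ofReal (G b) := ENNReal.ofReal_le_ofReal hbn
            _ = μ (Ico 0 b) := ENNReal.ofReal_toReal (measure_ne_top _ _)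
        have hlim := ge_of_tendsto htend (Filter.Eventually.of_forall hev)
        rw [hIccIco] at hlim
        have := ENNReal.toReal_mono (measure_ne_top μ _) hlim
        rw [ENNReal.toReal_ofReal ht0.le] at this
        exact this
    rw [hμset, ← ENNReal.ofReal_toReal (measure_ne_top μ (Ico 0 a))]
    congr 1
    exact le_antisymm hle hge
  haveI hfin : IsFiniteMeasure (Measure.map (cdf μ) μ) := by
    constructor
    rw [Measure.map_apply hmeas MeasurableSet.univ, preimage_univ]
    exact measure_lt_top μ univ
  refine ext_of_generate_finite (range Iio)
    (by rw [BorelSpace.measurable_eq (α := ℝ)]; exact borel_eq_generateFrom_Iio ℝ)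
    isPiSystem_Iio ?_ ?_
  · rintro S ⟨y, rfl⟩
    rw [Measure.map_apply hmeas measurableSet_Iio, Measure.restrict_apply measurableSet_Iio]
    have hre : μ (cdf μ ⁻¹' Iio y) = μ {x | x ∈ Ico (0:ℝ) 1 ∧ cdf μ x < y} := by
      rw [← measure_inter_conull (s := cdf μ ⁻¹' Iio y) hcompl]
      congr 1
      ext x
      simp only [mem_inter_iff, mem_preimage, mem_Iio, mem_setOf_eq]
      tauto
    rw [hre]
    rcases le_or_gt y 0 with hy | hy
    · have h1 : {x | x ∈ Ico (0:ℝ) 1 ∧ cdf μ x < y} = ∅ := by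
        ext x
        simp only [mem_setOf_eq, mem_empty_iff_false, iff_false, not_and]
        intro hx hlt
        rw [cdf_of_mem μ hx] at hlt
        have : (0:ℝ) ≤ (μ (Ico 0 x)).toReal := ENNReal.toReal_nonneg
        linarith
      have h2 : Iio y ∩ Ico (0:ℝ) 1 = ∅ := by
        ext z
        simp only [mem_inter_iff, mem_Iio, mem_Ico, mem_empty_iff_false, iff_false, not_and,
          not_lt]
        intro hz h0
        linarith
      rw [h1, h2, measure_empty, measure_empty]
    · rcases le_or_gt y 1 with hy1 | hy1
      · rw [key y hy hy1]
        have h2 : Iio y ∩ Ico (0:ℝ) 1 = Ico 0 y := by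
          ext z
          simp only [mem_inter_iff, mem_Iio, mem_Ico]
          constructor
          · rintro ⟨h1, h2, h3⟩; exact ⟨h2, h1⟩
          · rintro ⟨h1, h2⟩; exact ⟨h2, h1, by linarith⟩
        rw [h2, Real.volume_Ico]
        norm_num
      · have h1 : {x | x ∈ Ico (0:ℝ) 1 ∧ cdf μ x < y} = Ico (0:ℝ) 1 := by
          ext x
          simp only [mem_setOf_eq, and_iff_left_iff_imp]
          intro hx
          rw [cdf_of_mem μ hx]
          exact lt_of_le_of_lt (meas_toReal_le_one μ _) hy1
        have h2 : Iio y ∩ Ico (0:ℝ) 1 = Ico (0:ℝ) 1 :=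
          inter_eq_right.mpr fun z hz => by
            simp only [mem_Iio]; exact lt_of_lt_of_le hz.2 hy1.le
        rw [h1, h2, hμ1, Real.volume_Ico]
        norm_num
  · rw [Measure.map_apply hmeas MeasurableSet.univ, preimage_univ, measure_univ,
      Measure.restrict_apply MeasurableSet.univ, univ_inter, Real.volume_Ico]
    norm_num


lemma minkowski_aux (μ : Measure ℝ) [IsProbabilityMeasure μ] {p : ℝ} (hp : 1 ≤ p)
    (f g h : ℝ → ℝ) (hf : Measurable f) (hg : Measurable g) (hh : Measurable h)
    (hf0 : ∀ x, 0 ≤ f x) (hg0 : ∀ x, 0 ≤ g x) (hh0 : ∀ x, 0 ≤ h x)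
    (hg1 : ∀ x, g x ≤ 1) (hh1 : ∀ x, h x ≤ 1)
    (hfg : ∀ x, f x ≤ g x + h x) :
    (∫ x, f x ^ p ∂μ) ^ (1/p) ≤ (∫ x, g x ^ p ∂μ) ^ (1/p) + (∫ x, h x ^ p ∂μ) ^ (1/p) := by
  have hp0 : (0:ℝ) ≤ p := le_trans zero_le_one hp
  have hint : ∀ (u : ℝ → ℝ), Measurable u → (∀ x, 0 ≤ u x) →
      ∫ x, u x ^ p ∂μ = (∫⁻ x, ENNReal.ofReal (u x) ^ p ∂μ).toReal := by
    intro u hu hu0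
    rw [integral_eq_lintegral_of_nonneg_ae
      (Filter.Eventually.of_forall fun x => Real.rpow_nonneg (hu0 x) p)
      ((Real.continuous_rpow_const hp0).measurable.comp hu).aestronglyMeasurable]
    congr 1
    apply lintegral_congr
    intro x
    rw [ENNReal.ofReal_rpow_of_nonneg (hu0 x) hp0]
  have hfin : ∀ (u : ℝ → ℝ), (∀ x, u x ≤ 1) →
      (∫⁻ x, ENNReal.ofReal (u x) ^ p ∂μ) ≤ 1 := by
    intro u hu1
    calc ∫⁻ x, ENNReal.ofReal (u x) ^ p ∂μ
        ≤ ∫⁻ _, 1 ∂μ := lintegral_mono fun x =>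
          ENNReal.rpow_le_one (ENNReal.ofReal_le_one.mpr (hu1 x)) hp0
      _ = 1 := by simp
  have hmink := ENNReal.lintegral_Lp_add_le (μ := μ)
    (hg.ennreal_ofReal.aemeasurable) (hh.ennreal_ofReal.aemeasurable) hp
  have hmono : (∫⁻ x, ENNReal.ofReal (f x) ^ p ∂μ)
      ≤ ∫⁻ x, (ENNReal.ofReal (g x) + ENNReal.ofReal (h x)) ^ p ∂μ :=
    lintegral_mono fun x => ENNReal.rpow_le_rpow
      (by rw [← ENNReal.ofReal_add (hg0 x) (hh0 x)]
          exact ENNReal.ofReal_le_ofReal (hfg x)) hp0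
  have h1 : (∫⁻ x, ENNReal.ofReal (f x) ^ p ∂μ) ^ (1/p)
      ≤ (∫⁻ x, ENNReal.ofReal (g x) ^ p ∂μ) ^ (1/p)
        + (∫⁻ x, ENNReal.ofReal (h x) ^ p ∂μ) ^ (1/p) :=
    le_trans (ENNReal.rpow_le_rpow hmono (by positivity)) hmink
  have hbne : (∫⁻ x, ENNReal.ofReal (g x) ^ p ∂μ) ^ (1/p) ≠ ⊤ :=
    ENNReal.rpow_ne_top_of_nonneg (by positivity)
      (ne_top_of_le_ne_top ENNReal.one_ne_top (hfin g hg1))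
  have hcne : (∫⁻ x, ENNReal.ofReal (h x) ^ p ∂μ) ^ (1/p) ≠ ⊤ :=
    ENNReal.rpow_ne_top_of_nonneg (by positivity)
      (ne_top_of_le_ne_top ENNReal.one_ne_top (hfin h hh1))
  rw [hint f hf hf0, hint g hg hg0, hint h hh hh0,
    ENNReal.toReal_rpow, ENNReal.toReal_rpow, ENNReal.toReal_rpow,
    ← ENNReal.toReal_add hbne hcne]
  exact ENNReal.toReal_mono (ENNReal.add_ne_top.mpr ⟨hbne, hcne⟩) h1


lemma map_fract_embed (μ ν : Measure ℝ) [IsProbabilityMeasure μ] [IsProbabilityMeasure ν]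
    (hμ1 : μ (Ico 0 1) = 1) (hac : μ ≪ volume) (hν1 : ν (Ico 0 1) = 1) (α : ℝ) :
    Measure.map (fun x => quantile ν (Int.fract (cdf μ x - α))) μ = ν := by
  have hmeas1 : Measurable (cdf μ) := (cdf_mono μ).measurable
  have hmeas2 : Measurable (fun s : ℝ => quantile ν (Int.fract (s - α))) :=
    (quantile_mono ν).measurable.comp
      (measurable_fract.comp (measurable_id.sub measurable_const))
  have h1 : (fun x => quantile ν (Int.fract (cdf μ x - α)))
      = (fun s => quantile ν (Int.fract (s - α))) ∘ cdf μ := rfl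
  rw [h1, ← Measure.map_map hmeas2 hmeas1, map_cdf μ hμ1 hac, map_quantile_fract ν hν1 α]

/-- For `h(x) = |x|^p` with `1 ≤ p < ∞`,
`(ν₁,ν₂) ↦ LCOT_{μ,p}(ν₁,ν₂)^{1/p}` is a metric on circular probability measures:
nonnegative, symmetric, vanishing exactly when `ν₁ = ν₂`, and satisfying the triangle
inequality. Here `α_{μ,ν} = A ν` denotes the minimizer of the shift cost. -/
theorem lcot_is_metric
    (p : ℝ) (hp : 1 ≤ p)
    (μ : Measure ℝ) [IsProbabilityMeasure μ]
    (hμ : μ (Ico 0 1) = 1) (hac : μ ≪ volume)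
    (A : Measure ℝ → ℝ)
    (hA : ∀ ν : Measure ℝ, IsProbabilityMeasure ν → ν (Ico 0 1) = 1 →
      ∀ β : ℝ, shiftCost (fun x => |x| ^ p) μ ν (A ν) ≤
        shiftCost (fun x => |x| ^ p) μ ν β) :
    letI d : Measure ℝ → Measure ℝ → ℝ := fun ν₁ ν₂ =>
      (∫ t, circleDist (lcotEmbed μ ν₁ (A ν₁) t) (lcotEmbed μ ν₂ (A ν₂) t) ^ p ∂μ) ^ (1/p)
    ∀ ν₁ ν₂ ν₃ : Measure ℝ,
      IsProbabilityMeasure ν₁ → ν₁ (Ico 0 1) = 1 →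
      IsProbabilityMeasure ν₂ → ν₂ (Ico 0 1) = 1 →
      IsProbabilityMeasure ν₃ → ν₃ (Ico 0 1) = 1 →
      0 ≤ d ν₁ ν₂ ∧
      d ν₁ ν₂ = d ν₂ ν₁ ∧
      (d ν₁ ν₂ = 0 ↔ ν₁ = ν₂) ∧
      d ν₁ ν₂ ≤ d ν₁ ν₃ + d ν₃ ν₂ := by
  intro ν₁ ν₂ ν₃ h1 h1' h2 h2' h3 h3'
  haveI := h1; haveI := h2; haveI := h3
  beta_reduce
  have hE : ∀ (ν : Measure ℝ), IsProbabilityMeasure ν → Measurable (lcotEmbed μ ν (A ν)) := by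
    intro ν hν
    haveI := hν
    unfold lcotEmbed
    exact ((quantile_mono ν).measurable.comp
      ((cdf_mono μ).measurable.sub measurable_const)).sub measurable_id
  have hf : ∀ (νa νb : Measure ℝ), IsProbabilityMeasure νa → IsProbabilityMeasure νb →
      Measurable (fun t => circleDist (lcotEmbed μ νa (A νa) t) (lcotEmbed μ νb (A νb) t)) := by
    intro νa νb ha hb
    have heq : (fun t => circleDist (lcotEmbed μ νa (A νa) t) (lcotEmbed μ νb (A νb) t))
        = fun t => min (Int.fract (lcotEmbed μ νa (A νa) t - lcotEmbed μ νb (A νb) t))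
            (1 - Int.fract (lcotEmbed μ νa (A νa) t - lcotEmbed μ νb (A νb) t)) := by
      funext t; exact circleDist_eq _ _
    rw [heq]
    exact (measurable_fract.comp ((hE νa ha).sub (hE νb hb))).min
      (measurable_const.sub (measurable_fract.comp ((hE νa ha).sub (hE νb hb))))
  have hp0 : (0:ℝ) ≤ p := le_trans zero_le_one hp
  have hpne : p ≠ 0 := by linarith
  refine ⟨?_, ?_, ⟨?_, ?_⟩, ?_⟩
  · exact Real.rpow_nonneg
      (integral_nonneg fun t => Real.rpow_nonneg (circleDist_nonneg _ _) p) _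
  · have heq : (fun t => circleDist (lcotEmbed μ ν₁ (A ν₁) t) (lcotEmbed μ ν₂ (A ν₂) t) ^ p)
        = fun t => circleDist (lcotEmbed μ ν₂ (A ν₂) t) (lcotEmbed μ ν₁ (A ν₁) t) ^ p := by
      funext t; rw [circleDist_comm]
    rw [heq]
  · intro hd
    have hnn : 0 ≤ ∫ t, circleDist (lcotEmbed μ ν₁ (A ν₁) t) (lcotEmbed μ ν₂ (A ν₂) t) ^ p ∂μ :=
      integral_nonneg fun t => Real.rpow_nonneg (circleDist_nonneg _ _) p
    have hd0 : ∫ t, circleDist (lcotEmbed μ ν₁ (A ν₁) t) (lcotEmbed μ ν₂ (A ν₂) t) ^ p ∂μ = 0 :=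
      (Real.rpow_eq_zero hnn (one_div_ne_zero hpne)).mp hd
    have hintg : Integrable
        (fun t => circleDist (lcotEmbed μ ν₁ (A ν₁) t) (lcotEmbed μ ν₂ (A ν₂) t) ^ p) μ := by
      refine Integrable.mono' (integrable_const (1:ℝ))
        (((Real.continuous_rpow_const hp0).measurable.comp
          (hf ν₁ ν₂ h1 h2)).aestronglyMeasurable) ?_
      exact Filter.Eventually.of_forall fun t => by
        rw [Real.norm_eq_abs, abs_of_nonneg (Real.rpow_nonneg (circleDist_nonneg _ _) p)]
        exact Real.rpow_le_one (circleDist_nonneg _ _) (circleDist_le_one _ _) hp0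
    have hae := (integral_eq_zero_iff_of_nonneg
      (fun t => Real.rpow_nonneg (circleDist_nonneg _ _) p) hintg).mp hd0
    have hae2 : (fun t => quantile ν₁ (Int.fract (cdf μ t - A ν₁)))
        =ᵐ[μ] (fun t => quantile ν₂ (Int.fract (cdf μ t - A ν₂))) := by
      filter_upwards [hae] with t ht
      have h0 : circleDist (lcotEmbed μ ν₁ (A ν₁) t) (lcotEmbed μ ν₂ (A ν₂) t) ^ p = 0 := ht
      have hcd : circleDist (lcotEmbed μ ν₁ (A ν₁) t) (lcotEmbed μ ν₂ (A ν₂) t) = 0 :=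
        (Real.rpow_eq_zero (circleDist_nonneg _ _) hpne).mp h0
      have hfr0 : Int.fract (lcotEmbed μ ν₁ (A ν₁) t - lcotEmbed μ ν₂ (A ν₂) t) = 0 :=
        (circleDist_eq_zero_iff _ _).mp hcd
      have hdiff : lcotEmbed μ ν₁ (A ν₁) t - lcotEmbed μ ν₂ (A ν₂) t
          = quantile ν₁ (cdf μ t - A ν₁) - quantile ν₂ (cdf μ t - A ν₂) := by
        unfold lcotEmbed; ring
      set u := quantile ν₁ (cdf μ t - A ν₁) - quantile ν₂ (cdf μ t - A ν₂) with hu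
      have hfru : Int.fract u = 0 := by rw [← hdiff]; exact hfr0
      have hz : ∃ z : ℤ, quantile ν₁ (cdf μ t - A ν₁) - quantile ν₂ (cdf μ t - A ν₂) = z := by
        refine ⟨⌊u⌋, ?_⟩
        have hsf : u - (⌊u⌋ : ℝ) = Int.fract u := Int.self_sub_floor u
        rw [← hu]
        linarith [hsf, hfru]
      have hfe := Int.fract_eq_fract.mpr hz
      rw [fract_quantile ν₁ h1', fract_quantile ν₂ h2'] at hfe
      exact hfe
    calc ν₁ = Measure.map (fun t => quantile ν₁ (Int.fract (cdf μ t - A ν₁))) μ :=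
          (map_fract_embed μ ν₁ hμ hac h1' (A ν₁)).symm
      _ = Measure.map (fun t => quantile ν₂ (Int.fract (cdf μ t - A ν₂))) μ :=
          Measure.map_congr hae2
      _ = ν₂ := map_fract_embed μ ν₂ hμ hac h2' (A ν₂)
  · intro he
    subst he
    have heq : (fun t => circleDist (lcotEmbed μ ν₁ (A ν₁) t) (lcotEmbed μ ν₁ (A ν₁) t) ^ p)
        = fun _ => (0:ℝ) := by
      funext t
      rw [(circleDist_eq_zero_iff _ _).mpr (by rw [sub_self]; exact Int.fract_zero),
        Real.zero_rpow hpne]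
    rw [heq, integral_zero, Real.zero_rpow (one_div_ne_zero hpne)]
  · exact minkowski_aux μ hp _ _ _ (hf ν₁ ν₂ h1 h2) (hf ν₁ ν₃ h1 h3) (hf ν₃ ν₂ h3 h2)
      (fun t => circleDist_nonneg _ _) (fun t => circleDist_nonneg _ _)
      (fun t => circleDist_nonneg _ _) (fun t => circleDist_le_one _ _)
      (fun t => circleDist_le_one _ _) (fun t => circleDist_triangle _ _ _)
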